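/- Let W be a finite set of n voters and let 𝔊 be a collection of subsets of W (the winning coalitions) that is monotone (if A ∈ 𝔊 and A ⊆ B ⊆ W then B ∈ 𝔊), with W ∈ 𝔊 and ∅ ∉ 𝔊. Let {V₁, …, V_m} be an enumeration of the set of minimal winning coalitions of 𝔊 (the minimal elements of 𝔊 with respect to inclusion). Then for every voter w ∈ W, the Banzhaf score BS_w = #{C ∈ 𝔊 : w ∈ C and C \ {w} ∉ 𝔊} satisfies BS_w = Σ_{r=1}^{m} (−1)^{r−1} Σ_{1 ≤ i₁ < … < i_r ≤ m} t_{i₁,…,i_r}(w), where t_{i₁,…,i_r}(w) = 2^{n − #(V_{i₁} ∪ … ∪ V_{i_r})} if w ∈ V_{i₁} ∪ … ∪ V_{i_r}, and t_{i₁,…,i_r}(w) = 0 otherwise. -/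

import Mathlib

open Finset

private lemma bsc_aux_sum {α : Type*} [DecidableEq α] (S : Finset α) (p : α → Prop)
    [DecidablePred p] :
    ∑ I ∈ S.powerset, (-1:ℤ)^(I.card - 1) * (if ∃ i ∈ I, p i then (1:ℤ) else 0)
      = (if S.filter (fun i => ¬ p i) = ∅ then 1 else 0)
        - (if S = ∅ then 1 else 0) := by
  set B := S.filter (fun i => ¬ p i) with hBdef
  have hBS : B ⊆ S := filter_subset _ _
  have hfil : S.powerset.filter (fun I => I ⊆ B) = B.powerset := by
    ext I
    simp only [mem_filter, mem_powerset]
    exact ⟨fun h => h.2, fun h => ⟨h.trans hBS, h⟩⟩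
  have step1 : ∑ I ∈ S.powerset, (-1:ℤ)^(I.card - 1) * (if ∃ i ∈ I, p i then (1:ℤ) else 0)
      = -∑ I ∈ S.powerset, (-1:ℤ)^I.card * (if ∃ i ∈ I, p i then (1:ℤ) else 0) := by
    rw [← Finset.sum_neg_distrib]
    refine Finset.sum_congr rfl fun I hI => ?_
    by_cases hex : ∃ i ∈ I, p i
    · obtain ⟨i, hi, -⟩ := hex
      have hc : I.card - 1 + 1 = I.card :=
        Nat.succ_pred_eq_of_pos (card_pos.mpr ⟨i, hi⟩)
      have hpow : (-1:ℤ)^I.card = -(-1:ℤ)^(I.card - 1) := by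
        conv_lhs => rw [← hc]
        rw [pow_succ, mul_neg_one]
      rw [hpow]
      ring
    · simp [hex]
  have step2 : ∑ I ∈ S.powerset, (-1:ℤ)^I.card * (if ∃ i ∈ I, p i then (1:ℤ) else 0)
      = (if S = ∅ then 1 else 0) - (if B = ∅ then 1 else 0) := by
    have key : ∀ I ∈ S.powerset,
        (-1:ℤ)^I.card * (if ∃ i ∈ I, p i then (1:ℤ) else 0)
          = (-1:ℤ)^I.card - (if I ⊆ B then (-1:ℤ)^I.card else 0) := by
      intro I hI
      by_cases hex : ∃ i ∈ I, p i
      · have hnB : ¬ I ⊆ B := by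
          obtain ⟨i, hi, hpi⟩ := hex
          exact fun h => (mem_filter.mp (h hi)).2 hpi
        simp [hnB, hex]
      · have hIB : I ⊆ B := fun i hi =>
          mem_filter.mpr ⟨mem_powerset.mp hI hi, fun hp => hex ⟨i, hi, hp⟩⟩
        simp [hex, hIB]
    rw [Finset.sum_congr rfl key, Finset.sum_sub_distrib,
      Finset.sum_powerset_neg_one_pow_card, ← Finset.sum_filter, hfil,
      Finset.sum_powerset_neg_one_pow_card]
  rw [step1, step2]; ring

private lemma bsc_count {ι : Type*} [Fintype ι] [DecidableEq ι] (D : Finset ι) :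
    ∑ C ∈ (univ : Finset ι).powerset, (if D ⊆ C then (1:ℤ) else 0)
      = 2 ^ (Fintype.card ι - D.card) := by
  rw [Finset.sum_boole]
  have himg : (univ : Finset ι).powerset.filter (fun C => D ⊆ C)
      = (Dᶜ).powerset.image (· ∪ D) := by
    ext C
    simp only [mem_filter, mem_powerset, mem_image, subset_univ, true_and]
    constructor
    · intro h
      refine ⟨C \ D, fun x hx => mem_compl.mpr (mem_sdiff.mp hx).2, ?_⟩
      exact sdiff_union_of_subset h
    · rintro ⟨X, hX, rfl⟩
      exact subset_union_right
  have hinj : Set.InjOn (· ∪ D) ((Dᶜ).powerset : Set (Finset ι)) := by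
    intro X hX Y hY hXY
    simp only [coe_powerset, Set.mem_preimage, Set.mem_powerset_iff, coe_compl] at hX hY
    have hXD : X \ D = X := sdiff_eq_self_of_disjoint (by
      rw [disjoint_left]; intro a ha hD
      exact (hX ha) (by exact_mod_cast hD))
    have hYD : Y \ D = Y := sdiff_eq_self_of_disjoint (by
      rw [disjoint_left]; intro a ha hD
      exact (hY ha) (by exact_mod_cast hD))
    simp only at hXY
    calc X = (X ∪ D) \ D := by rw [union_sdiff_right, hXD]
      _ = (Y ∪ D) \ D := by rw [hXY]
      _ = Y := by rw [union_sdiff_right, hYD]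
  rw [himg, card_image_of_injOn hinj, card_powerset, card_compl]
  push_cast
  ring


/-- **Theorem 1 (BS-direct-calculation formula).**
In a voting system `(W, 𝔊)` (here `W` is the finite type `ι`, and `G` is the
monotone family of winning coalitions with `W ∈ G`, `∅ ∉ G`), let
`V 1, …, V m` be an enumeration of the minimal winning coalitions. Then the
Banzhaf score `BS_w = #{C ∈ G | w ∈ C, C \ {w} ∉ G}` of any voter `w` equals
`∑_{r=1}^m (−1)^{r−1} ∑_{1 ≤ i₁ < ⋯ < i_r ≤ m} t_{i₁,…,i_r}(w)`, where
`t_{i₁,…,i_r}(w) = 2^{n − #(V_{i₁} ∪ ⋯ ∪ V_{i_r})}` if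
`w ∈ V_{i₁} ∪ ⋯ ∪ V_{i_r}` and `0` otherwise. -/
theorem banzhaf_score_direct_calculation
    {ι : Type*} [Fintype ι] [DecidableEq ι] [Nonempty ι]
    (G : Finset (Finset ι))
    (hmono : ∀ A ∈ G, ∀ B : Finset ι, A ⊆ B → B ∈ G)
    (htop : (Finset.univ : Finset ι) ∈ G)
    (hbot : (∅ : Finset ι) ∉ G)
    (m : ℕ) (V : Fin m → Finset ι)
    (hVinj : Function.Injective V)
    (hVenum : ∀ A : Finset ι,
      (∃ i : Fin m, V i = A) ↔ (A ∈ G ∧ ∀ v ∈ A, A.erase v ∉ G))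
    (w : ι) :
    ((G.filter (fun C => w ∈ C ∧ C.erase w ∉ G)).card : ℤ) =
      ∑ r ∈ Finset.Icc 1 m, (-1 : ℤ) ^ (r - 1) *
        ∑ I ∈ Finset.powersetCard r (Finset.univ : Finset (Fin m)),
          (if w ∈ I.biUnion V
            then (2 : ℤ) ^ (Fintype.card ι - (I.biUnion V).card)
            else 0) := by
  classical
  have hVG : ∀ i, V i ∈ G := fun i => ((hVenum (V i)).mp ⟨i, rfl⟩).1
  have hex : ∀ k (C : Finset ι), C.card ≤ k → C ∈ G → ∃ i, V i ⊆ C := by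
    intro k
    induction k with
    | zero =>
      intro C hc hC
      have hC0 : C = ∅ := card_eq_zero.mp (Nat.le_zero.mp hc)
      exact absurd (hC0 ▸ hC) hbot
    | succ k ih =>
      intro C hc hC
      by_cases hmin : ∀ v ∈ C, C.erase v ∉ G
      · obtain ⟨i, hi⟩ := (hVenum C).mpr ⟨hC, hmin⟩
        exact ⟨i, hi ▸ subset_rfl⟩
      · push_neg at hmin
        obtain ⟨v, hv, he⟩ := hmin
        have hcard : (C.erase v).card ≤ k := by
          rw [card_erase_of_mem hv]
          have := card_pos.mpr ⟨v, hv⟩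
          omega
        obtain ⟨i, hi⟩ := ih (C.erase v) hcard he
        exact ⟨i, hi.trans (erase_subset _ _)⟩
  have hmemG : ∀ C : Finset ι, C ∈ G ↔ ∃ i, V i ⊆ C := fun C =>
    ⟨hex C.card C le_rfl, fun ⟨i, hi⟩ => hmono _ (hVG i) C hi⟩
  -- Step 1: LHS as a sum over all coalitions
  have hL : ((G.filter (fun C => w ∈ C ∧ C.erase w ∉ G)).card : ℤ)
      = ∑ C ∈ (univ : Finset ι).powerset,
          (if C ∈ G ∧ w ∈ C ∧ C.erase w ∉ G then (1:ℤ) else 0) := by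
    rw [Finset.sum_boole]
    norm_cast
    congr 1
    ext C
    simp only [mem_filter, mem_powerset, subset_univ, true_and]
  -- Step 2: RHS as a single sum over the powerset
  have hRHS : (∑ r ∈ Finset.Icc 1 m, (-1 : ℤ) ^ (r - 1) *
        ∑ I ∈ Finset.powersetCard r (Finset.univ : Finset (Fin m)),
          (if w ∈ I.biUnion V
            then (2 : ℤ) ^ (Fintype.card ι - (I.biUnion V).card)
            else 0))
      = ∑ I ∈ (univ : Finset (Fin m)).powerset, (-1:ℤ)^(I.card - 1) *
          (if w ∈ I.biUnion V
            then (2 : ℤ) ^ (Fintype.card ι - (I.biUnion V).card)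
            else 0) := by
    rw [powerset_card_biUnion, Finset.sum_biUnion ((pairwise_disjoint_powersetCard _).set_pairwise _), card_univ, Fintype.card_fin]
    have hins : Finset.range (m+1) = insert 0 (Finset.Icc 1 m) := by
      ext r
      simp only [Finset.mem_range, Finset.mem_insert, Finset.mem_Icc]
      omega
    rw [hins, Finset.sum_insert (by simp)]
    have h0 : ∑ I ∈ Finset.powersetCard 0 (univ : Finset (Fin m)),
        (-1:ℤ)^(I.card - 1) *
          (if w ∈ I.biUnion V
            then (2 : ℤ) ^ (Fintype.card ι - (I.biUnion V).card)
            else 0) = 0 := by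
      simp
    rw [h0, zero_add]
    refine Finset.sum_congr rfl fun r hr => ?_
    rw [Finset.mul_sum]
    refine Finset.sum_congr rfl fun I hI => ?_
    rw [(mem_powersetCard.mp hI).2]
  rw [hL, hRHS]
  -- Step 3: rewrite each powerset term as a sum over coalitions, then swap
  have hFt : ∀ I : Finset (Fin m),
      (if w ∈ I.biUnion V
        then (2 : ℤ) ^ (Fintype.card ι - (I.biUnion V).card) else 0)
        = ∑ C ∈ (univ : Finset ι).powerset,
            (if I.biUnion V ⊆ C ∧ w ∈ I.biUnion V then (1:ℤ) else 0) := by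
    intro I
    by_cases hw : w ∈ I.biUnion V
    · simp only [hw, if_true, and_true]
      exact (bsc_count (I.biUnion V)).symm
    · simp [hw]
  have hswap : ∑ I ∈ (univ : Finset (Fin m)).powerset, (-1:ℤ)^(I.card - 1) *
          (if w ∈ I.biUnion V
            then (2 : ℤ) ^ (Fintype.card ι - (I.biUnion V).card) else 0)
      = ∑ C ∈ (univ : Finset ι).powerset,
          ∑ I ∈ (univ : Finset (Fin m)).powerset, (-1:ℤ)^(I.card - 1) *
            (if I.biUnion V ⊆ C ∧ w ∈ I.biUnion V then (1:ℤ) else 0) := by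
    rw [Finset.sum_comm]
    refine Finset.sum_congr rfl fun I _ => ?_
    rw [hFt I, Finset.mul_sum]
  rw [hswap]
  -- Step 4: pointwise identity for each coalition C
  refine Finset.sum_congr rfl fun C _ => ?_
  symm
  set S := (univ : Finset (Fin m)).filter (fun i => V i ⊆ C) with hSdef
  have hconv : ∀ I ∈ (univ : Finset (Fin m)).powerset,
      (-1:ℤ)^(I.card - 1) * (if I.biUnion V ⊆ C ∧ w ∈ I.biUnion V then (1:ℤ) else 0)
        = if I ⊆ S then
            (-1:ℤ)^(I.card - 1) * (if ∃ i ∈ I, w ∈ V i then (1:ℤ) else 0) else 0 := by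
    intro I _
    by_cases hIS : I ⊆ S
    · have hsub : I.biUnion V ⊆ C :=
        biUnion_subset.mpr (fun i hi => (mem_filter.mp (hIS hi)).2)
      simp only [hIS, if_true, hsub, true_and, mem_biUnion]
    · have hns : ¬ I.biUnion V ⊆ C := by
        intro h
        exact hIS (fun i hi => mem_filter.mpr
          ⟨mem_univ i, (subset_biUnion_of_mem V hi).trans h⟩)
      simp [hIS, hns]
  rw [Finset.sum_congr rfl hconv, ← Finset.sum_filter]
  have hfil : (univ : Finset (Fin m)).powerset.filter (fun I => I ⊆ S) = S.powerset := by
    ext I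
    simp only [mem_filter, mem_powerset, subset_univ, true_and]
  rw [hfil, show (∑ I ∈ S.powerset, (-1:ℤ)^(I.card - 1) * (if ∃ i ∈ I, w ∈ V i then (1:ℤ) else 0))
      = (if S.filter (fun i => ¬ w ∈ V i) = ∅ then 1 else 0) - (if S = ∅ then 1 else 0) from by
    convert bsc_aux_sum S (fun i => w ∈ V i)]
  set B := S.filter (fun i => ¬ w ∈ V i) with hBdef
  by_cases hS : S = ∅
  · have hB : B = ∅ := by rw [hBdef, hS]; simp
    have hCG : C ∉ G := by
      intro hCG
      obtain ⟨i, hi⟩ := (hmemG C).mp hCG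
      have hiS : i ∈ S := mem_filter.mpr ⟨mem_univ i, hi⟩
      rw [hS] at hiS
      exact notMem_empty _ hiS
    simp [hS, hB, hCG]
  · by_cases hB : B = ∅
    · have hSne : S.Nonempty := nonempty_iff_ne_empty.mpr hS
      obtain ⟨i, hiS⟩ := hSne
      have hiC : V i ⊆ C := (mem_filter.mp hiS).2
      have hwi : w ∈ V i := by
        by_contra hw
        have hiB : i ∈ B := mem_filter.mpr ⟨hiS, hw⟩
        rw [hB] at hiB
        exact notMem_empty _ hiB
      have hCG : C ∈ G := (hmemG C).mpr ⟨i, hiC⟩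
      have hwC : w ∈ C := hiC hwi
      have herase : C.erase w ∉ G := by
        intro hG
        obtain ⟨j, hj⟩ := (hmemG _).mp hG
        have hjC : V j ⊆ C := hj.trans (erase_subset _ _)
        have hjw : w ∉ V j := (subset_erase.mp hj).2
        have hjB : j ∈ B := mem_filter.mpr ⟨mem_filter.mpr ⟨mem_univ j, hjC⟩, hjw⟩
        rw [hB] at hjB
        exact notMem_empty _ hjB
      simp [hS, hB, hCG, hwC, herase]
    · have hnd : ¬ (C ∈ G ∧ w ∈ C ∧ C.erase w ∉ G) := by
        rintro ⟨hCG, hwC, herase⟩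
        obtain ⟨j, hjB⟩ := nonempty_iff_ne_empty.mpr hB
        have hjS := mem_filter.mp hjB
        have hjC : V j ⊆ C := (mem_filter.mp hjS.1).2
        exact herase ((hmemG _).mpr ⟨j, subset_erase.mpr ⟨hjC, hjS.2⟩⟩)
      simp [hS, hB, hnd]
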